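/- Let χ ∈ L'^* be the linear functional with χ(x_i) = 1 for i = 1, …, k−2, χ(x_k) = 1, and χ(x_{k−1}) = χ(D) = χ(D') = 0. Then the coadjoint stabilizer L'_χ = {X ∈ L' : χ([X, Y]) = 0 for all Y ∈ L'} has dimension at most k−2. -/

import Mathlib

universe u v w

open Module

/-- The coadjoint stabilizer `g_χ = {X ∈ g : χ([X,Y]) = 0 for all Y ∈ g}` of a linear
functional `χ` on a Lie algebra `g`, as a linear subspace of `g`. -/
def coadjointStabilizer (𝕜 : Type u) [Field 𝕜] (g : Type v) [LieRing g] [LieAlgebra 𝕜 g]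
    (χ : Module.Dual 𝕜 g) : Submodule 𝕜 g where
  carrier := {X | ∀ Y : g, χ ⁅X, Y⁆ = 0}
  add_mem' := by intro a b ha hb; intro Y; rw [add_lie, map_add, ha Y, hb Y, add_zero]
  zero_mem' := by intro Y; rw [zero_lie, map_zero]
  smul_mem' := by intro c a ha; intro Y; rw [smul_lie, map_smul, ha Y, smul_zero]

/-- `b` is a basis of the Lie algebra `L'` of the paper: `Sum.inl i ↦ x_{i+1}`
(for `i : Fin k`), `Sum.inr 0 ↦ D`, `Sum.inr 1 ↦ D'`, where the `x_i` commute,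
`[D, D'] = 0`, `[D, x_i] = [D', x_i] = x_i` for `i = 1, …, k-2`, `[D, x_{k-1}] = x_k`,
`[D', x_{k-1}] = 0` and `[D, x_k] = [D', x_k] = 0`. -/
def IsL'Basis {𝕜 : Type u} [Field 𝕜] {L' : Type v} [LieRing L'] [LieAlgebra 𝕜 L']
    {k : ℕ} (b : Basis (Fin k ⊕ Fin 2) 𝕜 L') : Prop :=
  (∀ i j : Fin k, ⁅b (Sum.inl i), b (Sum.inl j)⁆ = 0) ∧
  (⁅b (Sum.inr 0), b (Sum.inr 1)⁆ = 0) ∧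
  (∀ i : Fin k, (i : ℕ) < k - 2 →
      ⁅b (Sum.inr 0), b (Sum.inl i)⁆ = b (Sum.inl i) ∧
      ⁅b (Sum.inr 1), b (Sum.inl i)⁆ = b (Sum.inl i)) ∧
  (∀ i j : Fin k, (i : ℕ) = k - 2 → (j : ℕ) = k - 1 →
      ⁅b (Sum.inr 0), b (Sum.inl i)⁆ = b (Sum.inl j) ∧
      ⁅b (Sum.inr 1), b (Sum.inl i)⁆ = 0) ∧
  (∀ i : Fin k, (i : ℕ) = k - 1 →
      ⁅b (Sum.inr 0), b (Sum.inl i)⁆ = 0 ∧ ⁅b (Sum.inr 1), b (Sum.inl i)⁆ = 0)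

/-- For fixed `Y`, the map `X ↦ χ ⁅X, Y⁆` as a linear map. -/
def brkT {𝕜 : Type u} [Field 𝕜] {L : Type v} [LieRing L] [LieAlgebra 𝕜 L]
    (χ : Module.Dual 𝕜 L) (Y : L) : L →ₗ[𝕜] 𝕜 where
  toFun X := χ ⁅X, Y⁆
  map_add' a c := by show χ ⁅a + c, Y⁆ = _; rw [add_lie, map_add]
  map_smul' c a := by show χ ⁅c • a, Y⁆ = _; rw [smul_lie, map_smul]; rfl

lemma brk_expand {𝕜 : Type u} [Field 𝕜] {L : Type v} [LieRing L] [LieAlgebra 𝕜 L]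
    {ι : Type w} [Fintype ι] [DecidableEq ι] (b : Basis ι 𝕜 L)
    (χ : Module.Dual 𝕜 L) (Y X : L) :
    χ ⁅X, Y⁆ = ∑ i, b.repr X i * χ ⁅b i, Y⁆ := by
  calc χ ⁅X, Y⁆ = brkT χ Y X := rfl
    _ = brkT χ Y (∑ i, b.repr X i • b i) := by rw [b.sum_repr]
    _ = ∑ i, b.repr X i * χ ⁅b i, Y⁆ := by
        rw [map_sum]
        refine Finset.sum_congr rfl fun i _ => ?_
        rw [map_smul, smul_eq_mul]; rfl

set_option maxHeartbeats 1000000 in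
/-- for the functional `χ ∈ L'^*` with `χ(x_i) = 1` for `i = 1, …, k-2`,
`χ(x_k) = 1`, and `χ(x_{k-1}) = χ(D) = χ(D') = 0`, the coadjoint stabilizer `L'_χ`
has dimension at most `k - 2`. -/
theorem stmt8 (p k : ℕ) (hp : p.Prime) (hk : 3 ≤ k)
    (𝕜 : Type u) [Field 𝕜] [IsAlgClosed 𝕜] [CharP 𝕜 p]
    (L' : Type v) [LieRing L'] [LieAlgebra 𝕜 L']
    (b : Basis (Fin k ⊕ Fin 2) 𝕜 L') (hb : IsL'Basis b)
    (χ : Module.Dual 𝕜 L')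
    (hχ1 : ∀ i : Fin k, (i : ℕ) ≠ k - 2 → χ (b (Sum.inl i)) = 1)
    (hχ2 : ∀ i : Fin k, (i : ℕ) = k - 2 → χ (b (Sum.inl i)) = 0)
    (hχ3 : ∀ j : Fin 2, χ (b (Sum.inr j)) = 0) :
    Module.finrank 𝕜 (coadjointStabilizer 𝕜 L' χ) ≤ k - 2 := by
  have : FiniteDimensional 𝕜 L' := Module.Finite.of_basis b
  obtain ⟨hcomm, hDD', hsmall, hmid, htop⟩ := hb
  set I0 : Fin k := ⟨0, by omega⟩ with hI0
  set K2 : Fin k := ⟨k - 2, by omega⟩ with hK2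
  set K1 : Fin k := ⟨k - 1, by omega⟩ with hK1
  have χK1 : χ (b (Sum.inl K1)) = 1 := hχ1 K1 (by simp [hK1]; omega)
  set S : Finset (Fin k) := Finset.univ.filter (fun j => (j : ℕ) < k - 2) with hS
  set S' : Finset (Fin k) := Finset.univ.filter (fun j => (j : ℕ) ≤ k - 2) with hS'
  -- the four linear conditions
  set f : Fin 4 → Module.Dual 𝕜 L' :=
    ![b.coord (Sum.inr 0), b.coord (Sum.inr 1), b.coord (Sum.inl K2),
      ∑ j ∈ S, b.coord (Sum.inl j)] with hf
  set ψ : L' →ₗ[𝕜] (Fin 4 → 𝕜) := LinearMap.pi f with hψ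
  -- step 1: the stabilizer is contained in ker ψ
  have hle : coadjointStabilizer 𝕜 L' χ ≤ LinearMap.ker ψ := by
    intro X hX
    have hX' : ∀ Y : L', χ ⁅X, Y⁆ = 0 := hX
    -- condition from Y = x_{k-1} (index K2)
    have h1 : b.repr X (Sum.inr 0) = 0 := by
      have h := hX' (b (Sum.inl K2))
      rw [brk_expand b, Fintype.sum_sum_type, Fin.sum_univ_two] at h
      have e1 : ∀ j : Fin k, χ ⁅b (Sum.inl j), b (Sum.inl K2)⁆ = 0 := by
        intro j; rw [hcomm, map_zero]
      have e2 := (hmid K2 K1 rfl rfl).1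
      have e3 := (hmid K2 K1 rfl rfl).2
      simp only [e1, mul_zero, Finset.sum_const_zero, zero_add, e2, e3, map_zero, χK1,
        mul_one, add_zero] at h
      exact h
    -- condition from Y = x_1 (index I0)
    have h2 : b.repr X (Sum.inr 1) = 0 := by
      have h := hX' (b (Sum.inl I0))
      rw [brk_expand b, Fintype.sum_sum_type, Fin.sum_univ_two] at h
      have hI0lt : (I0 : ℕ) < k - 2 := by simp [hI0]; omega
      have e1 : ∀ j : Fin k, χ ⁅b (Sum.inl j), b (Sum.inl I0)⁆ = 0 := by
        intro j; rw [hcomm, map_zero]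
      have e2 := (hsmall I0 hI0lt).1
      have e3 := (hsmall I0 hI0lt).2
      have e4 : χ (b (Sum.inl I0)) = 1 := hχ1 I0 (by omega)
      simp only [e1, mul_zero, Finset.sum_const_zero, zero_add, e2, e3, e4, mul_one, h1,
        zero_add] at h
      exact h
    -- condition from Y = D
    have h3 : ∑ j ∈ S', b.repr X (Sum.inl j) = 0 := by
      have h := hX' (b (Sum.inr 0))
      rw [brk_expand b, Fintype.sum_sum_type, Fin.sum_univ_two] at h
      have g : ∀ j : Fin k, χ ⁅b (Sum.inl j), b (Sum.inr 0)⁆ =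
          if (j : ℕ) ≤ k - 2 then -1 else 0 := by
        intro j
        rw [← lie_skew, map_neg]
        by_cases hj : (j : ℕ) < k - 2
        · rw [(hsmall j hj).1, hχ1 j (by omega), if_pos (by omega)]
        · by_cases hj2 : (j : ℕ) = k - 2
          · rw [(hmid j K1 hj2 rfl).1, χK1, if_pos (by omega)]
          · have hj3 : (j : ℕ) = k - 1 := by have := j.isLt; omega
            rw [(htop j hj3).1, map_zero, if_neg (by omega), neg_zero]
      have e2 : χ ⁅b (Sum.inr 0), b (Sum.inr 0)⁆ = 0 := by rw [lie_self, map_zero]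
      have e3 : χ ⁅b (Sum.inr 1), b (Sum.inr 0)⁆ = 0 := by
        rw [← lie_skew, hDD', neg_zero, map_zero]
      simp only [g, e2, e3, mul_zero, add_zero, mul_ite, mul_neg, mul_one] at h
      rw [← Finset.sum_filter] at h
      have h' : -∑ j ∈ S', b.repr X (Sum.inl j) = 0 := by
        rw [← Finset.sum_neg_distrib]; exact h
      exact neg_eq_zero.mp h'
    -- condition from Y = D'
    have h4 : ∑ j ∈ S, b.repr X (Sum.inl j) = 0 := by
      have h := hX' (b (Sum.inr 1))
      rw [brk_expand b, Fintype.sum_sum_type, Fin.sum_univ_two] at h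
      have g : ∀ j : Fin k, χ ⁅b (Sum.inl j), b (Sum.inr 1)⁆ =
          if (j : ℕ) < k - 2 then -1 else 0 := by
        intro j
        rw [← lie_skew, map_neg]
        by_cases hj : (j : ℕ) < k - 2
        · rw [(hsmall j hj).2, hχ1 j (by omega), if_pos hj]
        · by_cases hj2 : (j : ℕ) = k - 2
          · rw [(hmid j K1 hj2 rfl).2, map_zero, if_neg hj, neg_zero]
          · have hj3 : (j : ℕ) = k - 1 := by have := j.isLt; omega
            rw [(htop j hj3).2, map_zero, if_neg hj, neg_zero]
      have e2 : χ ⁅b (Sum.inr 0), b (Sum.inr 1)⁆ = 0 := by rw [hDD', map_zero]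
      have e3 : χ ⁅b (Sum.inr 1), b (Sum.inr 1)⁆ = 0 := by rw [lie_self, map_zero]
      simp only [g, e2, e3, mul_zero, add_zero, mul_ite, mul_neg, mul_one] at h
      rw [← Finset.sum_filter] at h
      have h' : -∑ j ∈ S, b.repr X (Sum.inl j) = 0 := by
        rw [← Finset.sum_neg_distrib]; exact h
      exact neg_eq_zero.mp h'
    -- deduce the K2 coordinate vanishes
    have hK2mem : K2 ∉ S := by simp [hS, hK2]
    have hins : S' = insert K2 S := by
      ext j; simp only [hS', hS, Finset.mem_filter, Finset.mem_univ, true_and,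
        Finset.mem_insert]
      constructor
      · intro hj
        by_cases hj2 : (j : ℕ) = k - 2
        · left; exact Fin.ext (by simpa [hK2] using hj2)
        · right; omega
      · rintro (rfl | hj)
        · simp [hK2]
        · omega
    have h5 : b.repr X (Sum.inl K2) = 0 := by
      rw [hins, Finset.sum_insert hK2mem, h4, add_zero] at h3
      exact h3
    -- conclude membership in the kernel
    rw [LinearMap.mem_ker]
    funext i
    fin_cases i <;>
      simp [hψ, hf, LinearMap.pi_apply, Matrix.cons_val_zero, Matrix.cons_val_one,
        Matrix.head_cons, Matrix.cons_val_two, Matrix.tail_cons, Matrix.cons_val_three,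
        Basis.coord_apply, LinearMap.coe_sum, Finset.sum_apply, h1, h2, h5, h4]
  -- step 2: ψ is surjective
  have hsurj : Function.Surjective ψ := by
    intro v
    refine ⟨v 0 • b (Sum.inr 0) + v 1 • b (Sum.inr 1) + v 2 • b (Sum.inl K2)
      + v 3 • b (Sum.inl I0), ?_⟩
    have hne : K2 ≠ I0 := by
      intro h; rw [hK2, hI0] at h; have := Fin.mk.injEq (k-2) _ 0 _ ▸ h; omega
    have hI0S : I0 ∈ S := by simp [hS, hI0]; omega
    have hK2S : K2 ∉ S := by simp [hS, hK2]
    have hI0K2 : (Sum.inl I0 : Fin k ⊕ Fin 2) ≠ Sum.inl K2 := by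
      simp [hI0, hK2, Fin.ext_iff]; omega
    funext i
    fin_cases i <;>
      simp [hψ, hf, LinearMap.pi_apply, map_add, map_smul, Basis.coord_apply,
        Basis.repr_self, Finsupp.single_apply, hne, hne.symm, Finset.sum_ite_eq,
        hK2S, hI0S, hI0K2] <;> try rfl
  have hker : finrank 𝕜 (LinearMap.ker ψ) = k - 2 := by
    have e1 := LinearMap.finrank_range_add_finrank_ker ψ
    have e2 : finrank 𝕜 (LinearMap.range ψ) = 4 := by
      rw [LinearMap.range_eq_top.mpr hsurj]
      rw [finrank_top]
      simp
    have e3 : finrank 𝕜 L' = k + 2 := by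
      rw [finrank_eq_card_basis b]
      simp
    omega
  calc finrank 𝕜 (coadjointStabilizer 𝕜 L' χ) ≤ finrank 𝕜 (LinearMap.ker ψ) :=
        Submodule.finrank_mono hle
    _ = k - 2 := hker
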